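/- Fix a vocabulary size V and a token sequence (i_1,…,i_n) ∈ {1,…,V}^n with empirical frequencies p_j := |{t : i_t = j}|/n and p_max := max_j p_j. Let E ∈ ℝ^{d×V} have independent columns e_1,…,e_V, each distributed N(0,I_d), and set X := [e_{i_1},…,e_{i_n}] ∈ ℝ^{d×n}. Then there exists a universal constant C > 0 such that for every ε ∈ (0,1), with probability at least 1 − 4exp(−Cε²d), one has X ≠ 0 and st(X) ≤ ((1+ε)/(1−ε))·(1/p_max). -/

import Mathlib

set_option maxHeartbeats 1000000

open MeasureTheory ProbabilityTheory

noncomputable section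

/-- Squared Frobenius norm of a real matrix. -/
def frobSq {m n : Type*} [Fintype m] [Fintype n] (A : Matrix m n ℝ) : ℝ :=
  ∑ i, ∑ j, (A i j) ^ 2

/-- Spectral (largest-singular-value) norm of a real matrix. -/
def opNorm {m n : Type*} [Fintype m] [Fintype n] [DecidableEq n] (A : Matrix m n ℝ) : ℝ :=
  ‖LinearMap.toContinuousLinearMap (Matrix.toEuclideanLin A)‖

/-- Stable rank `st(A) = ‖A‖_F² / ‖A‖_op²`. -/
def stRank {m n : Type*} [Fintype m] [Fintype n] [DecidableEq n] (A : Matrix m n ℝ) : ℝ :=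
  frobSq A / (opNorm A) ^ 2

section Aux

open Real
open scoped ENNReal NNReal

lemma gauss_sq_integrable' {c : ℝ} (hc : c < 1/2) :
    Integrable (fun x => Real.exp (c * x ^ 2)) (gaussianReal 0 1) := by
  rw [gaussianReal_of_var_ne_zero 0 one_ne_zero]
  rw [integrable_withDensity_iff (measurable_gaussianPDF 0 1)
    (ae_of_all _ fun x => ENNReal.ofReal_lt_top)]
  have : (fun x : ℝ => Real.exp (c * x ^ 2) * (gaussianPDF 0 1 x).toReal)
      = fun x : ℝ => (√(2 * π))⁻¹ * Real.exp (-(1/2 - c) * x ^ 2) := by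
    ext x
    rw [gaussianPDF, ENNReal.toReal_ofReal (gaussianPDFReal_nonneg 0 1 x), gaussianPDFReal]
    push_cast
    rw [mul_one, mul_comm, mul_assoc, ← Real.exp_add]
    ring_nf
  rw [this]
  exact (integrable_exp_neg_mul_sq (by linarith)).const_mul _

lemma gauss_sq_integral' {c : ℝ} (hc : c < 1/2) :
    ∫ x, Real.exp (c * x ^ 2) ∂(gaussianReal 0 1) = (Real.sqrt (1 - 2*c))⁻¹ := by
  rw [gaussianReal_of_var_ne_zero 0 one_ne_zero]
  have hpdf : gaussianPDF 0 1 = fun x => ((gaussianPDFReal 0 1 x).toNNReal : ℝ≥0∞) := rfl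
  rw [hpdf, integral_withDensity_eq_integral_smul
    ((measurable_gaussianPDFReal 0 1).real_toNNReal)]
  have h1 : (fun x : ℝ => (gaussianPDFReal 0 1 x).toNNReal • Real.exp (c * x ^ 2))
      = fun x : ℝ => (√(2 * π))⁻¹ * Real.exp (-(1/2 - c) * x ^ 2) := by
    ext x
    rw [NNReal.smul_def, smul_eq_mul, Real.coe_toNNReal _ (gaussianPDFReal_nonneg 0 1 x),
      gaussianPDFReal]
    push_cast
    rw [mul_one, mul_assoc, ← Real.exp_add]
    ring_nf
  rw [h1, MeasureTheory.integral_const_mul, integral_gaussian]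
  rw [← Real.sqrt_inv (2*π), ← Real.sqrt_mul (by positivity), ← Real.sqrt_inv (1-2*c)]
  congr 1
  have hπ := Real.pi_pos
  have h1c : (0:ℝ) < 1 - 2*c := by linarith
  have h12 : (0:ℝ) < 1/2 - c := by linarith
  field_simp [hπ.ne', h1c.ne', h12.ne']

lemma pi_integral_pow {E : Type*} [MeasurableSpace E] (μ : Measure E) [SigmaFinite μ]
    (ι : Type*) [Fintype ι] (f : E → ℝ) :
    ∫ x : ι → E, ∏ i, f (x i) ∂(Measure.pi fun _ => μ)
      = (∫ x, f x ∂μ) ^ (Fintype.card ι) := by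
  letI : MeasureSpace E := ⟨μ⟩
  exact integral_fintype_prod_eq_pow (ι := ι) f

lemma pi_integrable_prod {E : Type*} [MeasurableSpace E] (μ : Measure E) [SigmaFinite μ]
    {ι : Type*} [Fintype ι] {f : ι → E → ℝ} (hf : ∀ i, Integrable (f i) μ) :
    Integrable (fun x : ι → E => ∏ i, f i (x i)) (Measure.pi fun _ => μ) := by
  letI : MeasureSpace E := ⟨μ⟩
  exact Integrable.fintype_prod hf

lemma exp_eq_prod {d : ℕ} (c : ℝ) (x : Fin d → ℝ) :
    Real.exp (c * ∑ i, x i ^ 2) = ∏ i, Real.exp (c * x i ^ 2) := by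
  rw [← Real.exp_sum, Finset.mul_sum]

lemma pi_gauss_integral {d : ℕ} {c : ℝ} (hc : c < 1/2) :
    ∫ x : Fin d → ℝ, Real.exp (c * ∑ i, x i ^ 2) ∂(Measure.pi fun _ : Fin d => gaussianReal 0 1)
      = ((Real.sqrt (1 - 2*c))⁻¹) ^ d := by
  simp_rw [exp_eq_prod]
  rw [pi_integral_pow (gaussianReal 0 1) (Fin d) (fun x => Real.exp (c * x ^ 2)),
    gauss_sq_integral' hc, Fintype.card_fin]

lemma pi_gauss_integrable {d : ℕ} {c : ℝ} (hc : c < 1/2) :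
    Integrable (fun x : Fin d → ℝ => Real.exp (c * ∑ i, x i ^ 2))
      (Measure.pi fun _ : Fin d => gaussianReal 0 1) := by
  simp_rw [exp_eq_prod]
  exact pi_integrable_prod _ (fun _ => gauss_sq_integrable' hc)

lemma mgf_norm_sq {Ω : Type} [MeasurableSpace Ω] {P : Measure Ω} {d : ℕ} {Y : Ω → Fin d → ℝ}
    (hY : Measurable Y) (hlaw : Measure.map Y P = Measure.pi fun _ : Fin d => gaussianReal 0 1)
    {c : ℝ} (hc : c < 1/2) :
    (∫ ω, Real.exp (c * ∑ i, (Y ω i)^2) ∂P = ((Real.sqrt (1-2*c))⁻¹)^d) ∧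
      Integrable (fun ω => Real.exp (c * ∑ i, (Y ω i)^2)) P := by
  have hmeas : Measurable (fun x : Fin d → ℝ => Real.exp (c * ∑ i, x i ^ 2)) := by
    apply Real.measurable_exp.comp
    exact (Finset.measurable_sum _ fun i _ => (measurable_pi_apply i).pow_const 2).const_mul c
  constructor
  · rw [← pi_gauss_integral (d := d) hc, ← hlaw,
      integral_map hY.aemeasurable hmeas.aestronglyMeasurable]
  · have := pi_gauss_integrable (d := d) hc
    rw [← hlaw] at this
    exact (integrable_map_measure hmeas.aestronglyMeasurable hY.aemeasurable).mp this

lemma inv_sqrt_le_exp_upper {x : ℝ} (h0 : 0 ≤ x) (h1 : x ≤ 1/2) :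
    ((1:ℝ) - x)⁻¹ ≤ Real.exp (x + 2*x^2) := by
  have h1x : (0:ℝ) < 1 - x := by linarith
  have e1 : x + 2*x^2 + 1 ≤ Real.exp (x + 2*x^2) := Real.add_one_le_exp _
  rw [inv_le_iff_one_le_mul₀ h1x]
  nlinarith [mul_le_mul_of_nonneg_right e1 h1x.le]

lemma inv_one_add_le_exp {y : ℝ} (h0 : 0 ≤ y) (h1 : y ≤ 1/4) :
    ((1:ℝ) + y)⁻¹ ≤ Real.exp (-(y - 2*y^2)) := by
  have hz : (0:ℝ) < 1 - (y - 2*y^2) := by nlinarith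
  have key : Real.exp (y - 2*y^2) ≤ 1 + y := by
    have h2 : Real.exp (y - 2*y^2) ≤ (1 - (y - 2*y^2))⁻¹ := by
      have hrw : Real.exp (y - 2*y^2) = (Real.exp (-(y - 2*y^2)))⁻¹ := by
        rw [Real.exp_neg, inv_inv]
      rw [hrw]
      exact inv_anti₀ hz (by linarith [Real.add_one_le_exp (-(y - 2*y^2))])
    refine h2.trans ?_
    rw [inv_le_iff_one_le_mul₀ hz]
    nlinarith
  rw [Real.exp_neg]
  exact inv_anti₀ (by positivity) key

lemma inv_sqrt_le_exp_half {a b : ℝ} (ha : 0 < a) (h : a⁻¹ ≤ Real.exp b) :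
    (Real.sqrt a)⁻¹ ≤ Real.exp (b/2) := by
  rw [← Real.sqrt_inv]
  calc Real.sqrt a⁻¹ ≤ Real.sqrt (Real.exp b) := Real.sqrt_le_sqrt h
    _ = Real.exp (b/2) := by
        rw [show Real.exp b = (Real.exp (b/2))^2 by rw [sq, ← Real.exp_add]; ring_nf]
        exact Real.sqrt_sq (Real.exp_pos _).le

lemma opNorm_sq_ge {d n : ℕ} (A : Matrix (Fin d) (Fin n) ℝ) {s : Finset (Fin n)}
    (hs : 0 < s.card) (w : Fin d → ℝ) (hA : ∀ i, ∀ t ∈ s, A i t = w i) :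
    (s.card : ℝ) * ∑ i, w i ^ 2 ≤ opNorm A ^ 2 := by
  set c : ℝ := (s.card : ℝ) with hcdef
  have hc : 0 < c := by rw [hcdef]; exact_mod_cast hs
  set v : EuclideanSpace ℝ (Fin n) := WithLp.toLp 2 (fun t => if t ∈ s then (Real.sqrt c)⁻¹ else 0) with hvdef
  have hv : ‖v‖ = 1 := by
    rw [EuclideanSpace.norm_eq]
    have hsum : ∑ t, ‖v t‖ ^ 2 = ∑ t ∈ s, ((Real.sqrt c)⁻¹ : ℝ) ^ 2 := by
      calc ∑ t, ‖v t‖ ^ 2 = ∑ t, (if t ∈ s then ((Real.sqrt c)⁻¹ : ℝ) ^ 2 else 0) := by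
            refine Finset.sum_congr rfl fun t _ => ?_
            by_cases ht : t ∈ s <;> simp [hvdef, ht, Real.norm_eq_abs, sq_abs]
        _ = ∑ t ∈ s, ((Real.sqrt c)⁻¹ : ℝ) ^ 2 := by
            rw [Finset.sum_ite_mem, Finset.univ_inter]
    rw [hsum, Finset.sum_const, nsmul_eq_mul, ← hcdef, ← Real.sqrt_inv,
      Real.sq_sqrt (by positivity), mul_inv_cancel₀ hc.ne', Real.sqrt_one]
  set f := LinearMap.toContinuousLinearMap (Matrix.toEuclideanLin A) with hfdef
  have hfv : ∀ i, f v i = c * (Real.sqrt c)⁻¹ * w i := by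
    intro i
    have h0 : f v i = ∑ t, A i t * v t := rfl
    rw [h0]
    calc ∑ t, A i t * v t = ∑ t, (if t ∈ s then w i * (Real.sqrt c)⁻¹ else 0) := by
          refine Finset.sum_congr rfl fun t _ => ?_
          by_cases ht : t ∈ s
          · rw [hA i t ht]; simp [hvdef, ht]
          · simp [hvdef, ht]
      _ = ∑ t ∈ s, w i * (Real.sqrt c)⁻¹ := by rw [Finset.sum_ite_mem, Finset.univ_inter]
      _ = c * (Real.sqrt c)⁻¹ * w i := by rw [Finset.sum_const, nsmul_eq_mul, ← hcdef]; ring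
  have hnorm : ‖f v‖ ^ 2 = c * ∑ i, w i ^ 2 := by
    rw [EuclideanSpace.norm_eq, Real.sq_sqrt (by positivity)]
    have hsq : (c * (Real.sqrt c)⁻¹) ^ 2 = c := by
      rw [mul_pow, ← Real.sqrt_inv, Real.sq_sqrt (by positivity)]
      field_simp
    calc ∑ i, ‖f v i‖ ^ 2 = ∑ i, c * w i ^ 2 := by
          refine Finset.sum_congr rfl fun i _ => ?_
          rw [hfv i, Real.norm_eq_abs, sq_abs, mul_pow, hsq]
      _ = c * ∑ i, w i ^ 2 := by rw [Finset.mul_sum]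
  have hle : ‖f v‖ ≤ opNorm A := by
    calc ‖f v‖ ≤ ‖f‖ * ‖v‖ := f.le_opNorm v
      _ = opNorm A := by rw [hv, mul_one, opNorm, hfdef]
  calc c * ∑ i, w i ^ 2 = ‖f v‖ ^ 2 := hnorm.symm
    _ ≤ opNorm A ^ 2 := by nlinarith [norm_nonneg (f v), hle]

end Aux

theorem token_embedding_low_stable_rank :
    ∃ C : ℝ, 0 < C ∧
      ∀ (Ω : Type) [MeasurableSpace Ω] (P : Measure Ω) [IsProbabilityMeasure P]
        (d V n : ℕ) (_hd : 0 < d) (hn : 0 < n)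
        (tok : Fin n → Fin V)
        (e : Fin V → Ω → (Fin d → ℝ))
        (_hmeas : ∀ j, Measurable (e j))
        (_hindep : iIndepFun e P)
        (_hlaw : ∀ j, Measure.map (e j) P = Measure.pi fun _ : Fin d => gaussianReal 0 1)
        (X : Ω → Matrix (Fin d) (Fin n) ℝ)
        (_hX : ∀ ω (i : Fin d) (t : Fin n), X ω i t = e (tok t) ω i)
        (pmax : ℝ)
        (_hpmax : pmax = Finset.univ.sup'
          (Finset.univ_nonempty_iff.mpr ⟨tok ⟨0, hn⟩⟩)
          (fun j => ((Finset.univ.filter fun t => tok t = j).card : ℝ) / n))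
        (ε : ℝ) (_hε : ε ∈ Set.Ioo (0:ℝ) 1),
        ENNReal.ofReal (1 - 4 * Real.exp (-(C * ε ^ 2 * d))) ≤
          P {ω | X ω ≠ 0 ∧ stRank (X ω) ≤ ((1 + ε) / (1 - ε)) * (1 / pmax)} := by
  refine ⟨1/16, by norm_num, ?_⟩
  intro Ω _ P _ d V n hd hn tok e hmeas hindep hlaw X hX pmax hpmax ε hε
  obtain ⟨hε0, hε1⟩ := hε
  have hn' : (0:ℝ) < n := by exact_mod_cast hn
  have hd' : (0:ℝ) < d := by exact_mod_cast hd
  classical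
  -- counts and empirical frequencies
  set cnt : Fin V → ℕ := fun j => (Finset.univ.filter fun t => tok t = j).card with hcnt
  set p : Fin V → ℝ := fun j => (cnt j : ℝ) / n with hp
  have hp_nonneg : ∀ j, 0 ≤ p j := fun j => by positivity
  have hcnt_le : ∀ j, (cnt j : ℝ) ≤ n := by
    intro j
    have : cnt j ≤ n := by
      calc cnt j ≤ Finset.univ.card := Finset.card_filter_le _ _
        _ = n := Finset.card_fin n
    exact_mod_cast this
  have hp_le_one : ∀ j, p j ≤ 1 := by
    intro j
    rw [hp]
    exact div_le_one_of_le₀ (hcnt_le j) hn'.le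
  have hcnt_sum : ∑ j, (cnt j : ℝ) = n := by
    have : (Finset.univ : Finset (Fin n)).card = ∑ j, cnt j :=
      Finset.card_eq_sum_card_fiberwise (fun t _ => Finset.mem_univ (tok t))
    rw [Finset.card_fin] at this
    exact_mod_cast this.symm
  have hp_sum : ∑ j, p j = 1 := by
    rw [hp]
    rw [← Finset.sum_div, hcnt_sum, div_self hn'.ne']
  have hp_sq_sum : ∑ j, (p j)^2 ≤ 1 := by
    rw [← hp_sum]
    refine Finset.sum_le_sum fun j _ => ?_
    nlinarith [hp_nonneg j, hp_le_one j]
  -- the max frequency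
  have hne : (Finset.univ : Finset (Fin V)).Nonempty := ⟨tok ⟨0, hn⟩, Finset.mem_univ _⟩
  obtain ⟨jm, _, hjm⟩ := Finset.exists_mem_eq_sup'
    (Finset.univ_nonempty_iff.mpr ⟨tok ⟨0, hn⟩⟩)
    (fun j => ((Finset.univ.filter fun t => tok t = j).card : ℝ) / n)
  have hpmax_eq : pmax = p jm := by rw [hpmax, hjm]
  have hcnt0_pos : 0 < cnt (tok ⟨0, hn⟩) := by
    refine Finset.card_pos.mpr ⟨⟨0, hn⟩, ?_⟩
    simp
  have hpmax_ge : p (tok ⟨0, hn⟩) ≤ pmax := by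
    rw [hpmax]
    exact Finset.le_sup' _ (Finset.mem_univ _)
  have hpmax_pos : 0 < pmax := by
    refine lt_of_lt_of_le ?_ hpmax_ge
    rw [hp]
    have : (0:ℝ) < cnt (tok ⟨0, hn⟩) := by exact_mod_cast hcnt0_pos
    positivity
  have hcntjm_pos : 0 < cnt jm := by
    rcases Nat.eq_zero_or_pos (cnt jm) with h|h
    · exfalso
      have hpe : pmax = (cnt jm : ℝ) / n := hpmax_eq
      rw [h] at hpe
      simp at hpe
      rw [hpe] at hpmax_pos
      exact lt_irrefl _ hpmax_pos
    · exact h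
  have hcntjm : (cnt jm : ℝ) = n * pmax := by
    rw [hpmax_eq, hp]
    field_simp
  -- random variables
  set q : Fin V → Ω → ℝ := fun j ω => ∑ i, (e j ω i)^2 with hq
  set Y : Fin V → Ω → ℝ := fun j ω => p j * ∑ i, (e j ω i)^2 with hY
  have hq_meas : ∀ j, Measurable (q j) := by
    intro j
    apply Finset.measurable_sum
    intro i _
    exact ((measurable_pi_apply i).comp (hmeas j)).pow_const 2
  have hY_meas : ∀ j, Measurable (Y j) := fun j => (hq_meas j).const_mul (p j)
  have hY_indep : iIndepFun Y P := by
    have := hindep.comp (fun j (x : Fin d → ℝ) => p j * ∑ i, x i ^ 2)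
      (fun j => ((Finset.measurable_sum _ fun i _ =>
        (measurable_pi_apply i).pow_const 2).const_mul (p j)))
    exact this
  set t : ℝ := ε/8 with ht
  have ht0 : 0 < t := by rw [ht]; linarith
  have htp_lt : ∀ j, t * p j < 1/2 := by
    intro j
    have h1 : t * p j ≤ t * 1 := mul_le_mul_of_nonneg_left (hp_le_one j) ht0.le
    rw [mul_one] at h1
    rw [ht] at h1 ⊢
    linarith
  have htp_nonneg : ∀ j, 0 ≤ t * p j := fun j => mul_nonneg ht0.le (hp_nonneg j)
  -- mgf of each Y j
  have hmgfY : ∀ j, mgf (Y j) P t = ((Real.sqrt (1 - 2*(t * p j)))⁻¹)^d := by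
    intro j
    have h := mgf_norm_sq (hmeas j) (hlaw j) (htp_lt j)
    rw [mgf]
    rw [show (fun ω => Real.exp (t * Y j ω))
        = fun ω => Real.exp ((t * p j) * ∑ i, (e j ω i)^2) by
      funext ω; rw [hY]; ring_nf]
    exact h.1
  have hintY : ∀ j, Integrable (fun ω => Real.exp (t * Y j ω)) P := by
    intro j
    have h := mgf_norm_sq (hmeas j) (hlaw j) (htp_lt j)
    rw [show (fun ω => Real.exp (t * Y j ω))
        = fun ω => Real.exp ((t * p j) * ∑ i, (e j ω i)^2) by
      funext ω; rw [hY]; ring_nf]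
    exact h.2
  -- Chernoff upper tail for S = ∑ Y j
  have hint_sum : Integrable (fun ω => Real.exp (t * (∑ j, Y j) ω)) P :=
    hY_indep.integrable_exp_mul_sum hY_meas (fun j _ => hintY j)
  have hchernoff_up := measure_ge_le_exp_mul_mgf (X := ∑ j, Y j) (μ := P)
    ((1+ε)*d) ht0.le hint_sum
  have hmgf_sum : mgf (∑ j, Y j) P t = ∏ j, mgf (Y j) P t :=
    hY_indep.mgf_sum hY_meas Finset.univ
  have hEdef : ∀ j, ((Real.sqrt (1 - 2*(t * p j)))⁻¹)^d
      ≤ Real.exp ((d : ℝ) * (t * p j + 4*(t * p j)^2)) := by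
    intro j
    set c := t * p j with hcdef
    have hc0 : 0 ≤ c := htp_nonneg j
    have hc1 : c < 1/2 := htp_lt j
    have hc14 : 2*c ≤ 1/2 := by
      have := hp_le_one j
      have := hp_nonneg j
      rw [hcdef, ht]
      nlinarith
    have hbase : (Real.sqrt (1 - 2*c))⁻¹ ≤ Real.exp ((2*c + 2*(2*c)^2)/2) := by
      refine inv_sqrt_le_exp_half (by linarith) ?_
      exact inv_sqrt_le_exp_upper (by linarith) hc14
    calc ((Real.sqrt (1 - 2*c))⁻¹)^d ≤ (Real.exp ((2*c + 2*(2*c)^2)/2))^d := by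
          exact pow_le_pow_left₀ (by positivity) hbase d
      _ = Real.exp ((d:ℝ) * ((2*c + 2*(2*c)^2)/2)) := by rw [Real.exp_nat_mul]
      _ = Real.exp ((d:ℝ) * (c + 4*c^2)) := by congr 1; ring
  have hmgf_prod : mgf (∑ j, Y j) P t ≤ Real.exp ((d:ℝ)*t + 4*(d:ℝ)*t^2) := by
    rw [hmgf_sum]
    calc ∏ j, mgf (Y j) P t
        ≤ ∏ j, Real.exp ((d : ℝ) * (t * p j + 4*(t * p j)^2)) := by
          refine Finset.prod_le_prod (fun j _ => ?_) (fun j _ => ?_)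
          · rw [hmgfY j]; positivity
          · rw [hmgfY j]; exact hEdef j
      _ = Real.exp (∑ j, (d : ℝ) * (t * p j + 4*(t * p j)^2)) := by
          rw [Real.exp_sum]
      _ ≤ Real.exp ((d:ℝ)*t + 4*(d:ℝ)*t^2) := by
          apply Real.exp_le_exp.mpr
          have : ∑ j, (d : ℝ) * (t * p j + 4*(t * p j)^2)
              = (d:ℝ)*t*(∑ j, p j) + 4*(d:ℝ)*t^2*(∑ j, (p j)^2) := by
            rw [Finset.mul_sum, Finset.mul_sum, ← Finset.sum_add_distrib]
            refine Finset.sum_congr rfl fun j _ => ?_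
            ring
          rw [this, hp_sum]
          have h4 := mul_le_mul_of_nonneg_left hp_sq_sum
            (by positivity : (0:ℝ) ≤ 4*(d:ℝ)*t^2)
          rw [mul_one] at h4
          linarith
  set E : ℝ := Real.exp (-(1/16 * ε^2 * d)) with hEdef2
  have hup : (P {ω | (1+ε)*(d:ℝ) ≤ (∑ j, Y j) ω}).toReal ≤ E := by
    refine hchernoff_up.trans ?_
    calc Real.exp (-t * ((1+ε)*d)) * mgf (∑ j, Y j) P t
        ≤ Real.exp (-t * ((1+ε)*d)) * Real.exp ((d:ℝ)*t + 4*(d:ℝ)*t^2) :=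
          mul_le_mul_of_nonneg_left hmgf_prod (Real.exp_pos _).le
      _ = Real.exp (-t * ((1+ε)*d) + ((d:ℝ)*t + 4*(d:ℝ)*t^2)) := by rw [← Real.exp_add]
      _ = E := by rw [hEdef2]; congr 1; rw [ht]; ring
  -- Chernoff lower tail for q jm
  set s : ℝ := -(ε/8) with hs
  have hs_lt : s < 1/2 := by rw [hs]; linarith
  have hqjm := mgf_norm_sq (hmeas jm) (hlaw jm) hs_lt
  have hint_q : Integrable (fun ω => Real.exp (s * q jm ω)) P := hqjm.2
  have hchernoff_lo := measure_le_le_exp_mul_mgf (X := q jm) (μ := P)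
    ((1-ε)*d) (by rw [hs]; linarith) hint_q
  have hmgf_q : mgf (q jm) P s = ((Real.sqrt (1 - 2*s))⁻¹)^d := hqjm.1
  have hlo : (P {ω | q jm ω ≤ (1-ε)*(d:ℝ)}).toReal ≤ E := by
    refine hchernoff_lo.trans ?_
    have hy0 : (0:ℝ) ≤ ε/4 := by linarith
    have hy1 : ε/4 ≤ 1/4 := by linarith
    have hbase : (Real.sqrt (1 - 2*s))⁻¹ ≤ Real.exp ((-(ε/4 - 2*(ε/4)^2))/2) := by
      have h12s : 1 - 2*s = 1 + ε/4 := by rw [hs]; ring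
      rw [h12s]
      refine inv_sqrt_le_exp_half (by linarith) ?_
      exact inv_one_add_le_exp hy0 hy1
    have hmgfb : mgf (q jm) P s ≤ Real.exp ((d:ℝ) * ((-(ε/4 - 2*(ε/4)^2))/2)) := by
      rw [hmgf_q]
      calc ((Real.sqrt (1 - 2*s))⁻¹)^d ≤ (Real.exp ((-(ε/4 - 2*(ε/4)^2))/2))^d :=
            pow_le_pow_left₀ (by positivity) hbase d
        _ = Real.exp ((d:ℝ) * ((-(ε/4 - 2*(ε/4)^2))/2)) := by rw [Real.exp_nat_mul]
    calc Real.exp (-s * ((1-ε)*d)) * mgf (q jm) P s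
        ≤ Real.exp (-s * ((1-ε)*d)) * Real.exp ((d:ℝ) * ((-(ε/4 - 2*(ε/4)^2))/2)) :=
          mul_le_mul_of_nonneg_left hmgfb (Real.exp_pos _).le
      _ = Real.exp (-s * ((1-ε)*d) + (d:ℝ) * ((-(ε/4 - 2*(ε/4)^2))/2)) := by
          rw [← Real.exp_add]
      _ = E := by rw [hEdef2]; congr 1; rw [hs]; ring
  -- events
  set A : Set Ω := {ω | (1+ε)*(d:ℝ) ≤ (∑ j, Y j) ω} with hA
  set B : Set Ω := {ω | q jm ω ≤ (1-ε)*(d:ℝ)} with hB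
  have hS_meas : Measurable (∑ j, Y j : Ω → ℝ) := by
    have h1 : (∑ j, Y j : Ω → ℝ) = fun ω => ∑ j, Y j ω := by
      funext ω; simp
    rw [h1]
    exact Finset.measurable_sum _ (fun j _ => hY_meas j)
  have hA_meas : MeasurableSet A := measurableSet_le measurable_const hS_meas
  have hB_meas : MeasurableSet B := measurableSet_le (hq_meas jm) measurable_const
  -- good event inclusion
  have hsub : (A ∪ B)ᶜ ⊆ {ω | X ω ≠ 0 ∧ stRank (X ω) ≤ ((1 + ε) / (1 - ε)) * (1 / pmax)} := by
    intro ω hω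
    rw [Set.mem_compl_iff, Set.mem_union] at hω
    push_neg at hω
    obtain ⟨hωA, hωB⟩ := hω
    rw [hA, Set.mem_setOf_eq, not_le] at hωA
    rw [hB, Set.mem_setOf_eq, not_le] at hωB
    -- q jm ω > (1-ε)d > 0
    have hqpos : 0 < q jm ω :=
      lt_trans (mul_pos (by linarith : (0:ℝ) < 1-ε) hd') hωB
    -- opNorm lower bound
    have hfilter : ∀ i, ∀ τ ∈ Finset.univ.filter fun τ => tok τ = jm, X ω i τ = e jm ω i := by
      intro i τ hτ
      rw [Finset.mem_filter] at hτ
      rw [hX ω i τ, hτ.2]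
    have hop : (cnt jm : ℝ) * q jm ω ≤ opNorm (X ω) ^ 2 := by
      have := opNorm_sq_ge (X ω) (s := Finset.univ.filter fun τ => tok τ = jm)
        hcntjm_pos (e jm ω) hfilter
      exact this
    -- frobSq identity
    have hfrob : frobSq (X ω) = (n:ℝ) * (∑ j, Y j) ω := by
      rw [frobSq, Finset.sum_comm]
      calc ∑ τ, ∑ i, X ω i τ ^ 2 = ∑ τ, q (tok τ) ω := by
            refine Finset.sum_congr rfl fun τ _ => ?_
            rw [hq]
            refine Finset.sum_congr rfl fun i _ => ?_
            rw [hX ω i τ]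
        _ = ∑ j, ∑ τ ∈ Finset.univ.filter fun τ => tok τ = j, q (tok τ) ω :=
            (Finset.sum_fiberwise_of_maps_to (fun τ _ => Finset.mem_univ (tok τ)) _).symm
        _ = ∑ j, (cnt j : ℝ) * q j ω := by
            refine Finset.sum_congr rfl fun j _ => ?_
            rw [Finset.sum_congr rfl (fun τ hτ => ?_), Finset.sum_const, nsmul_eq_mul, hcnt]
            rw [Finset.mem_filter] at hτ
            rw [hτ.2]
        _ = (n:ℝ) * (∑ j, Y j) ω := by
            rw [Finset.sum_apply]
            rw [Finset.mul_sum]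
            refine Finset.sum_congr rfl fun j _ => ?_
            rw [hY, hq, hp]
            simp only
            field_simp
    -- X ω ≠ 0
    have hXne : X ω ≠ 0 := by
      intro h0
      obtain ⟨τ0, hτ0⟩ := Finset.card_pos.mp hcntjm_pos
      rw [Finset.mem_filter] at hτ0
      have : q jm ω = 0 := by
        rw [hq]
        simp only
        refine Finset.sum_eq_zero fun i _ => ?_
        have := hX ω i τ0
        rw [h0] at this
        simp at this
        rw [← hτ0.2, ← this]
        ring
      rw [this] at hqpos
      exact lt_irrefl _ hqpos
    refine ⟨hXne, ?_⟩
    -- stable rank bound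
    have hden_pos : (0:ℝ) < (n:ℝ) * pmax * ((1-ε)*d) := by
      have : (0:ℝ) < (1-ε)*d := by nlinarith
      positivity
    have hden_le : (n:ℝ) * pmax * ((1-ε)*d) ≤ opNorm (X ω) ^ 2 := by
      refine le_trans ?_ hop
      rw [hcntjm]
      have : (0:ℝ) ≤ (n:ℝ) * pmax := by positivity
      nlinarith [hωB]
    have hnum : frobSq (X ω) ≤ (n:ℝ) * ((1+ε)*d) := by
      rw [hfrob]
      exact mul_le_mul_of_nonneg_left hωA.le hn'.le
    rw [stRank]
    calc frobSq (X ω) / opNorm (X ω) ^ 2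
        ≤ ((n:ℝ) * ((1+ε)*d)) / ((n:ℝ) * pmax * ((1-ε)*d)) := by
          refine div_le_div₀ (by positivity) hnum hden_pos hden_le
      _ = ((1 + ε) / (1 - ε)) * (1 / pmax) := by
          field_simp [hn'.ne', hpmax_pos.ne', hd'.ne',
            (show (1:ℝ)-ε ≠ 0 by linarith)]
  -- probability arithmetic
  have hPA : P A ≤ ENNReal.ofReal E := by
    rw [ENNReal.le_ofReal_iff_toReal_le (measure_ne_top P A) (Real.exp_pos _).le]
    exact hup
  have hPB : P B ≤ ENNReal.ofReal E := by
    rw [ENNReal.le_ofReal_iff_toReal_le (measure_ne_top P B) (Real.exp_pos _).le]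
    exact hlo
  have hPAB : P (A ∪ B) ≤ ENNReal.ofReal (2*E) := by
    calc P (A ∪ B) ≤ P A + P B := measure_union_le A B
      _ ≤ ENNReal.ofReal E + ENNReal.ofReal E := add_le_add hPA hPB
      _ = ENNReal.ofReal (2*E) := by
          rw [← ENNReal.ofReal_add (Real.exp_pos _).le (Real.exp_pos _).le]
          norm_num [two_mul]
          rw [hEdef2]
  have hcompl : P ((A ∪ B)ᶜ) = 1 - P (A ∪ B) :=
    prob_compl_eq_one_sub (hA_meas.union hB_meas)
  calc ENNReal.ofReal (1 - 4 * Real.exp (-(1/16 * ε ^ 2 * d)))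
      ≤ ENNReal.ofReal (1 - 2*E) := by
        apply ENNReal.ofReal_le_ofReal
        rw [hEdef2]
        have := Real.exp_pos (-(1/16 * ε^2 * d))
        linarith
    _ ≤ 1 - ENNReal.ofReal (2*E) := by
        rw [← ENNReal.ofReal_one, ← ENNReal.ofReal_sub _ (by positivity)]
    _ ≤ 1 - P (A ∪ B) := tsub_le_tsub_left hPAB 1
    _ = P ((A ∪ B)ᶜ) := hcompl.symm
    _ ≤ P {ω | X ω ≠ 0 ∧ stRank (X ω) ≤ ((1 + ε) / (1 - ε)) * (1 / pmax)} :=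
        measure_mono hsub
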